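/- Let G be a finite group that is p-central of height k, i.e., every element of order p lies in ζ_k(G). If p^e is the exponent of Ω₁(G,p), then the subgroup generated by all p^{e+k}-th powers of elements of G centralizes Ω₁(G,p). -/

import Mathlib

/-- `Omega p i G` is the subgroup of `G` generated by all elements of order dividing `p^i`. -/
def Omega (p i : ℕ) (G : Type*) [Group G] : Subgroup G :=
  Subgroup.closure {x : G | x ^ p ^ i = 1}

open scoped commutatorElement

namespace PcentralAux

variable {G : Type*} [Group G]

lemma closure_normal_of_conj {S : Set G} (hS : ∀ x ∈ S, ∀ g : G, g * x * g⁻¹ ∈ S) :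
    (Subgroup.closure S).Normal := by
  constructor
  intro n hn g
  have hmap : Subgroup.map (MulAut.conj g).toMonoidHom (Subgroup.closure S)
      ≤ Subgroup.closure S := by
    rw [MonoidHom.map_closure]
    apply (Subgroup.closure_le _).mpr
    rintro y ⟨x, hx, rfl⟩
    exact Subgroup.subset_closure (by simpa using hS x hx g)
  have := hmap ⟨n, hn, rfl⟩
  simpa using this

lemma conj_pow_eq (a b : G) (hc : ∀ z : G, Commute ⁅a, b⁆ z) :
    ∀ n : ℕ, a ^ n * b * (a ^ n)⁻¹ = ⁅a, b⁆ ^ n * b := by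
  intro n
  induction n with
  | zero => simp
  | succ n ih =>
    have h1 : a ^ (n + 1) * b * (a ^ (n + 1))⁻¹ = a * (a ^ n * b * (a ^ n)⁻¹) * a⁻¹ := by
      group
    rw [h1, ih]
    have h2 : a * (⁅a, b⁆ ^ n * b) * a⁻¹ = (a * ⁅a, b⁆ ^ n * a⁻¹) * (a * b * a⁻¹) := by
      group
    rw [h2]
    have h3 : a * ⁅a, b⁆ ^ n * a⁻¹ = ⁅a, b⁆ ^ n := by
      have h := ((hc a).pow_left n).eq
      rw [← h]; group
    have h4 : a * b * a⁻¹ = ⁅a, b⁆ * b := by group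
    rw [h3, h4, pow_succ, mul_assoc]

lemma commutator_pow_of_central (a b : G) (hc : ∀ z : G, Commute ⁅a, b⁆ z) (n : ℕ) :
    ⁅a ^ n, b⁆ = ⁅a, b⁆ ^ n := by
  have h := conj_pow_eq a b hc n
  calc ⁅a ^ n, b⁆ = (a ^ n * b * (a ^ n)⁻¹) * b⁻¹ := by group
  _ = (⁅a, b⁆ ^ n * b) * b⁻¹ := by rw [h]
  _ = ⁅a, b⁆ ^ n := by group

variable (p : ℕ) (C : ℕ → Subgroup G)

/-- The mixed power-commutator filtration. -/
def Xser (i q : ℕ) : Subgroup G :=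
  Subgroup.closure {x : G | ∃ r v, v ∈ C (i + 1 + r) ∧ x = v ^ p ^ (q - r)}

lemma mem_Xser {i q : ℕ} (r : ℕ) {v : G} (hv : v ∈ C (i + 1 + r)) (F : ℕ) (hF : q - r ≤ F) :
    v ^ p ^ F ∈ Xser p C i q := by
  have h0 : v ^ p ^ (q - r) ∈ Xser p C i q := Subgroup.subset_closure ⟨r, v, hv, rfl⟩
  have he : v ^ p ^ F = (v ^ p ^ (q - r)) ^ p ^ (F - (q - r)) := by
    rw [← pow_mul, ← pow_add, Nat.add_sub_cancel' hF]
  rw [he]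
  exact pow_mem h0 _

lemma Xser_normal (hnorm : ∀ i, (C i).Normal) (i q : ℕ) : (Xser p C i q).Normal := by
  apply closure_normal_of_conj
  rintro x ⟨r, v, hv, rfl⟩ g
  exact ⟨r, g * v * g⁻¹, (hnorm _).conj_mem v hv g, (conj_pow).symm⟩

lemma Xser_shift_le (i r q : ℕ) : Xser p C (i + 1 + r) (q - r) ≤ Xser p C i (q + 1) := by
  rw [Xser, Subgroup.closure_le]
  rintro x ⟨r', v, hv, rfl⟩
  have hv' : v ∈ C (i + 1 + (r + 1 + r')) := by
    have h : i + 1 + (r + 1 + r') = i + 1 + r + 1 + r' := by omega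
    rw [h]; exact hv
  exact mem_Xser p C (r + 1 + r') hv' (q - r - r') (by omega)

/-- Key step: modulo `Xser i (q+1)`, the subgroup `Xser i q` is central and killed by `p`-th
powers; granted the commutator statement for all exponents `≤ q`. -/
lemma stepA (hnorm : ∀ i, (C i).Normal) (q i : ℕ)
    (ih : ∀ q', q' ≤ q → ∀ i' (u g : G), u ∈ C i' → ⁅u ^ p ^ q', g⁆ ∈ Xser p C i' q')
    [hN : (Xser p C i (q + 1)).Normal] :
    ∀ w ∈ Xser p C i q,
      (QuotientGroup.mk' (Xser p C i (q + 1))) w ∈ Subgroup.center (G ⧸ Xser p C i (q + 1)) ∧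
      ((QuotientGroup.mk' (Xser p C i (q + 1))) w) ^ p = 1 := by
  set N := Xser p C i (q + 1) with hNdef
  set π := QuotientGroup.mk' N with hπ
  intro w hw
  induction hw using Subgroup.closure_induction with
  | mem x hx =>
    obtain ⟨r, v, hv, rfl⟩ := hx
    constructor
    · rw [Subgroup.mem_center_iff]
      intro z
      induction z using QuotientGroup.induction_on with
      | H h =>
        have h1 : ⁅v ^ p ^ (q - r), h⁆ ∈ N :=
          Xser_shift_le p C i r q (ih (q - r) (by omega) (i + 1 + r) v h hv)
        have h2 : π ⁅v ^ p ^ (q - r), h⁆ = 1 := by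
          rw [hπ, QuotientGroup.mk'_apply, QuotientGroup.eq_one_iff]; exact h1
        rw [map_commutatorElement] at h2
        have h3 := commutatorElement_eq_one_iff_commute.mp h2
        have h4 : π h = ((h : G) : G ⧸ N) := by rw [hπ, QuotientGroup.mk'_apply]
        rw [← h4]
        exact (h3.symm).eq
    · have h5 : (π (v ^ p ^ (q - r))) ^ p = π (v ^ p ^ (q - r + 1)) := by
        rw [← map_pow, ← pow_mul, ← pow_succ]
      rw [h5, hπ, QuotientGroup.mk'_apply, QuotientGroup.eq_one_iff]
      exact mem_Xser p C r hv (q - r + 1) (by omega)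
  | one => exact ⟨by simpa using Subgroup.one_mem _, by simp⟩
  | mul a b ha hb iha ihb =>
    have hcom : Commute (π a) (π b) := (Subgroup.mem_center_iff.mp iha.1 (π b)).symm
    constructor
    · rw [map_mul]; exact mul_mem iha.1 ihb.1
    · rw [map_mul, hcom.mul_pow, iha.2, ihb.2, one_mul]
  | inv a ha iha =>
    constructor
    · rw [map_inv]; exact inv_mem iha.1
    · rw [map_inv, inv_pow, iha.2, inv_one]

lemma stmt_cumul (hnorm : ∀ i, (C i).Normal)
    (hcomm : ∀ i (u g : G), u ∈ C i → ⁅u, g⁆ ∈ C (i + 1)) :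
    ∀ q q', q' ≤ q → ∀ i (u g : G), u ∈ C i → ⁅u ^ p ^ q', g⁆ ∈ Xser p C i q' := by
  intro q
  induction q with
  | zero =>
    intro q' hq' i u g hu
    interval_cases q'
    have h1 : ⁅u, g⁆ ∈ C (i + 1 + 0) := hcomm i u g hu
    have h2 := mem_Xser p C (i := i) (q := 0) 0 h1 0 le_rfl
    simpa using h2
  | succ q ih =>
    intro q' hq' i u g hu
    rcases Nat.lt_or_ge q' (q + 1) with hlt | hge
    · exact ih q' (by omega) i u g hu
    · have hq'eq : q' = q + 1 := by omega
      subst hq'eq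
      haveI hN : (Xser p C i (q + 1)).Normal := Xser_normal p C hnorm i (q + 1)
      set π := QuotientGroup.mk' (Xser p C i (q + 1)) with hπ
      have hA := stepA p C hnorm q i (fun q'' hq'' i' u' g' hu' => ih q'' hq'' i' u' g' hu')
      have hc0 : ⁅u ^ p ^ q, g⁆ ∈ Xser p C i q := ih q le_rfl i u g hu
      obtain ⟨hcent, hpow⟩ := hA _ hc0
      have hcomm' : ∀ z, Commute ⁅π (u ^ p ^ q), π g⁆ z := by
        intro z
        rw [← map_commutatorElement]
        exact (Subgroup.mem_center_iff.mp hcent z).symm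
      have key : π ⁅u ^ p ^ (q + 1), g⁆ = 1 := by
        have e1 : u ^ p ^ (q + 1) = (u ^ p ^ q) ^ p := by rw [← pow_mul, ← pow_succ]
        rw [e1, map_commutatorElement, map_pow,
          commutator_pow_of_central (π (u ^ p ^ q)) (π g) hcomm' p, ← map_commutatorElement]
        exact hpow
      rw [hπ, QuotientGroup.mk'_apply, QuotientGroup.eq_one_iff] at key
      exact key

lemma stmt (hnorm : ∀ i, (C i).Normal)
    (hcomm : ∀ i (u g : G), u ∈ C i → ⁅u, g⁆ ∈ C (i + 1)) (q i : ℕ) (u g : G)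
    (hu : u ∈ C i) : ⁅u ^ p ^ q, g⁆ ∈ Xser p C i q :=
  stmt_cumul p C hnorm hcomm q q le_rfl i u g hu

lemma main_comm (hnorm : ∀ i, (C i).Normal)
    (hcomm : ∀ i (u g : G), u ∈ C i → ⁅u, g⁆ ∈ C (i + 1)) :
    ∀ t (y b : G), b ∈ C 0 → ⁅y ^ p ^ t, b⁆ ∈ Xser p C 0 t := by
  intro t
  induction t with
  | zero =>
    intro y b hb
    have h1 : ⁅b, y⁆ ∈ C (0 + 1 + 0) := hcomm 0 b y hb
    have h1' : ⁅y, b⁆ ∈ C (0 + 1 + 0) := by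
      have : ⁅y, b⁆ = ⁅b, y⁆⁻¹ := (commutatorElement_inv b y).symm
      rw [this]
      exact inv_mem h1
    have h2 := mem_Xser p C (i := 0) (q := 0) 0 h1' 0 le_rfl
    simpa using h2
  | succ t iht =>
    intro y b hb
    haveI hN : (Xser p C 0 (t + 1)).Normal := Xser_normal p C hnorm 0 (t + 1)
    set π := QuotientGroup.mk' (Xser p C 0 (t + 1)) with hπ
    have hA := stepA p C hnorm t 0
      (fun q'' hq'' i' u' g' hu' => stmt p C hnorm hcomm q'' i' u' g' hu')
    have hc0 : ⁅y ^ p ^ t, b⁆ ∈ Xser p C 0 t := iht y b hb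
    obtain ⟨hcent, hpow⟩ := hA _ hc0
    have hcomm' : ∀ z, Commute ⁅π (y ^ p ^ t), π b⁆ z := by
      intro z
      rw [← map_commutatorElement]
      exact (Subgroup.mem_center_iff.mp hcent z).symm
    have key : π ⁅y ^ p ^ (t + 1), b⁆ = 1 := by
      have e1 : y ^ p ^ (t + 1) = (y ^ p ^ t) ^ p := by rw [← pow_mul, ← pow_succ]
      rw [e1, map_commutatorElement, map_pow,
        commutator_pow_of_central (π (y ^ p ^ t)) (π b) hcomm' p, ← map_commutatorElement]
      exact hpow
    rw [hπ, QuotientGroup.mk'_apply, QuotientGroup.eq_one_iff] at key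
    exact key

end PcentralAux

open PcentralAux in
lemma Omega_normal (p i : ℕ) (G : Type*) [Group G] : (Omega p i G).Normal := by
  apply closure_normal_of_conj
  intro x hx g
  have hx' : x ^ p ^ i = 1 := hx
  show (g * x * g⁻¹) ^ p ^ i = 1
  rw [conj_pow, hx', mul_one, mul_inv_cancel]

/-- If `G` is a finite `p`-central group of height `k` and `p^e` is the exponent
of `Ω₁(G,p)`, then the subgroup generated by all `p^(e+k)`-th powers centralizes `Ω₁(G,p)`. -/
theorem powers_le_centralizer_omega
    (p : ℕ) (hp : p.Prime) (G : Type*) [Group G] [Finite G] (k : ℕ) (hk : 1 ≤ k)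
    (h : Omega p 1 G ≤ upperCentralSeries G k)
    (e : ℕ) (he : Monoid.exponent (Omega p 1 G) = p ^ e) :
    Subgroup.closure {y : G | ∃ x : G, y = x ^ p ^ (e + k)} ≤
      Subgroup.centralizer (Omega p 1 G : Set G) := by
  classical
  set Ω := Omega p 1 G with hΩ
  have hΩn : Ω.Normal := Omega_normal p 1 G
  set C : ℕ → Subgroup G := fun i => Ω ⊓ upperCentralSeries G (k - i) with hC
  have hnorm : ∀ i, (C i).Normal := by
    intro i
    constructor
    rintro n ⟨h1, h2⟩ g
    exact ⟨hΩn.conj_mem n h1 g, (inferInstance : (Subgroup.upperCentralSeries G (k - i)).Normal).conj_mem n h2 g⟩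
  have hcomm : ∀ i (u g : G), u ∈ C i → ⁅u, g⁆ ∈ C (i + 1) := by
    intro i u g hu
    obtain ⟨huΩ, huZ⟩ := Subgroup.mem_inf.mp hu
    refine Subgroup.mem_inf.mpr ⟨?_, ?_⟩
    · -- ⁅u, g⁆ ∈ Ω by normality
      have h1 : ⁅u, g⁆ = u * (g * u⁻¹ * g⁻¹) := by group
      rw [h1]
      exact mul_mem huΩ (hΩn.conj_mem u⁻¹ (inv_mem huΩ) g)
    · rcases Nat.lt_or_ge i k with hik | hik
      · have hki : k - i = (k - (i + 1)) + 1 := by omega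
        rw [hki] at huZ
        have := (mem_upperCentralSeries_succ_iff).mp huZ g
        simpa [commutatorElement_def, upperCentralSeries] using this
      · have hki : k - i = 0 := by omega
        rw [hki, upperCentralSeries, upperCentralSeries_zero, Subgroup.mem_bot] at huZ
        subst huZ
        simpa using Subgroup.one_mem _
  apply (Subgroup.closure_le _).mpr
  rintro y ⟨x, rfl⟩
  rw [SetLike.mem_coe, Subgroup.mem_centralizer_iff]
  intro b hb
  have hbC : b ∈ C 0 := Subgroup.mem_inf.mpr ⟨hb, by simpa using h hb⟩
  have hm := PcentralAux.main_comm p C hnorm hcomm (e + k) x b hbC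
  have hXbot : PcentralAux.Xser p C 0 (e + k) ≤ ⊥ := by
    rw [PcentralAux.Xser, Subgroup.closure_le]
    rintro z ⟨r, v, hv, rfl⟩
    obtain ⟨hvΩ, hvZ⟩ := Subgroup.mem_inf.mp hv
    simp only [SetLike.mem_coe, Subgroup.mem_bot]
    rcases Nat.lt_or_ge r (k - 1) with hrk | hrk
    · -- v has order dividing p^e and the exponent is big enough
      have hv1 : v ^ p ^ e = 1 := by
        have h1 : (⟨v, hvΩ⟩ : Ω) ^ p ^ e = 1 := by
          rw [← he]; exact Monoid.pow_exponent_eq_one _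
        have h2 := congrArg (fun z : Ω => (z : G)) h1
        simpa using h2
      have hE : e + k - r = e + (k - r) := by omega
      rw [hE, pow_add, pow_mul, hv1, one_pow]
    · -- the chain has run out: v ∈ UCS 0 = ⊥
      have hki : k - (0 + 1 + r) = 0 := by omega
      rw [hki, upperCentralSeries, upperCentralSeries_zero, Subgroup.mem_bot] at hvZ
      subst hvZ
      simp
  have hone : ⁅x ^ p ^ (e + k), b⁆ = 1 := by
    have := hXbot hm
    simpa [Subgroup.mem_bot] using this
  have hcom := commutatorElement_eq_one_iff_commute.mp hone
  exact hcom.symm.eq
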